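/- If f : ℝ^{N×n} → ℝ is rank-one convex (convex along all directions a ⊗ b with a ∈ ℝ^N, b ∈ ℝ^n) and positively 1-homogeneous (f(tξ) = t f(ξ) for t > 0), then for every matrix ξ₀ with rank ξ₀ ≤ 1 there exists a linear functional ℓ on ℝ^{N×n} with ℓ(ξ₀) = f(ξ₀) and f ≥ ℓ everywhere; i.e., f is convex at every matrix of rank at most one. -/

import Mathlib

open Set

/-- Rank-one convexity: convexity along all directions `a ⊗ b`. -/
def RankOneConvex {N n : ℕ} (f : Matrix (Fin N) (Fin n) ℝ → ℝ) : Prop :=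
  ∀ (ξ : Matrix (Fin N) (Fin n) ℝ) (a : Fin N → ℝ) (b : Fin n → ℝ),
    ConvexOn ℝ Set.univ (fun t : ℝ => f (ξ + t • Matrix.vecMulVec a b))

namespace KKblowdown

variable {N n : ℕ}

abbrev Mat (N n : ℕ) := Matrix (Fin N) (Fin n) ℝ

/-- rank ≤ 1 matrices, in factored form. -/
def IsR1 (η : Mat N n) : Prop := ∃ a b, η = Matrix.vecMulVec a b

/-- The structural assumptions that are preserved by blow-downs. -/
structure Good (g : Mat N n → ℝ) : Prop where
  rc : ∀ (ξ : Mat N n) (a : Fin N → ℝ) (b : Fin n → ℝ),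
    ConvexOn ℝ Set.univ (fun t : ℝ => g (ξ + t • Matrix.vecMulVec a b))
  hom : ∀ t : ℝ, 0 < t → ∀ ξ : Mat N n, g (t • ξ) = t * g ξ

lemma smul_vecMulVec (c : ℝ) (a : Fin N → ℝ) (b : Fin n → ℝ) :
    c • Matrix.vecMulVec a b = Matrix.vecMulVec (c • a) b := by
  ext i j
  simp [Matrix.vecMulVec_apply, mul_assoc]

lemma IsR1.smul {η : Mat N n} (h : IsR1 η) (c : ℝ) : IsR1 (c • η) := by
  obtain ⟨a, b, rfl⟩ := h
  exact ⟨c • a, b, smul_vecMulVec c a b⟩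

lemma IsR1.neg {η : Mat N n} (h : IsR1 η) : IsR1 (-η) := by
  have := h.smul (-1)
  simpa using this

lemma Good.lineConvex {g : Mat N n → ℝ} (hg : Good g) {ρ : Mat N n} (hρ : IsR1 ρ)
    (ξ : Mat N n) : ConvexOn ℝ Set.univ (fun t : ℝ => g (ξ + t • ρ)) := by
  obtain ⟨a, b, rfl⟩ := hρ
  exact hg.rc ξ a b

lemma Good.three {g : Mat N n → ℝ} (hg : Good g) {ρ : Mat N n} (hρ : IsR1 ρ)
    (ξ : Mat N n) {p q x y r : ℝ} (hp : 0 ≤ p) (hq : 0 ≤ q) (hpq : p + q = 1)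
    (hr : r = p * x + q * y) :
    g (ξ + r • ρ) ≤ p * g (ξ + x • ρ) + q * g (ξ + y • ρ) := by
  subst hr
  simpa [smul_eq_mul] using
    (hg.lineConvex hρ ξ).2 (mem_univ x) (mem_univ y) hp hq hpq

lemma Good.zero {g : Mat N n → ℝ} (hg : Good g) : g 0 = 0 := by
  have h := hg.hom 2 two_pos 0
  simp only [smul_zero] at h
  linarith

lemma Good.homNN {g : Mat N n → ℝ} (hg : Good g) {t : ℝ} (ht : 0 ≤ t) (ξ : Mat N n) :
    g (t • ξ) = t * g ξ := by
  rcases eq_or_lt_of_le ht with h | h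
  · simp [← h, hg.zero]
  · exact hg.hom t h ξ

/-- matrix units -/
def Ep (p : Fin N × Fin n) : Mat N n := Matrix.single p.1 p.2 (1 : ℝ)

lemma isR1_Ep (p : Fin N × Fin n) : IsR1 (Ep p) :=
  ⟨_, _, Matrix.single_eq_single_vecMulVec_single p.1 p.2⟩

/-- decomposition of a matrix into rank-one (scaled matrix unit) summands. -/
noncomputable def decompList (ξ : Mat N n) : List (Mat N n) :=
  ((Finset.univ : Finset (Fin N × Fin n)).toList).map fun p => ξ p.1 p.2 • Ep p

lemma isR1_decompList (ξ : Mat N n) : ∀ ρ ∈ decompList ξ, IsR1 ρ := by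
  intro ρ hρ
  simp only [decompList, List.mem_map] at hρ
  obtain ⟨p, _, rfl⟩ := hρ
  exact (isR1_Ep p).smul _

lemma sum_smul_Ep (ξ : Mat N n) :
    (∑ p : Fin N × Fin n, ξ p.1 p.2 • Ep p) = ξ := by
  have h := Matrix.matrix_eq_sum_single ξ
  calc (∑ p : Fin N × Fin n, ξ p.1 p.2 • Ep p)
      = ∑ p : Fin N × Fin n, Matrix.single p.1 p.2 (ξ p.1 p.2) := by
        apply Finset.sum_congr rfl
        intro p _
        rw [Ep, Matrix.smul_single]
        simp
    _ = ∑ i : Fin N, ∑ j : Fin n, Matrix.single i j (ξ i j) := by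
        rw [← Finset.sum_product']
        rfl
    _ = ξ := h.symm

lemma sum_decompList (ξ : Mat N n) : (decompList ξ).sum = ξ := by
  rw [decompList, Finset.sum_map_toList]
  exact sum_smul_Ep ξ

/-- max of `g` over the vertices of a (one-sided) cube. -/
def cubeMax (g : Mat N n → ℝ) : Mat N n → List (Mat N n) → ℝ
  | ζ, [] => g ζ
  | ζ, ρ :: L => max (cubeMax g ζ L) (cubeMax g (ζ + ρ) L)

lemma cube_bound {g : Mat N n → ℝ} (hg : Good g) :
    ∀ (L : List (Mat N n)), (∀ ρ ∈ L, IsR1 ρ) →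
    ∀ (ts : List ℝ), ts.length = L.length → (∀ x ∈ ts, 0 ≤ x ∧ x ≤ 1) →
    ∀ ζ : Mat N n, g (ζ + (List.zipWith (· • ·) ts L).sum) ≤ cubeMax g ζ L := by
  intro L
  induction L with
  | nil =>
      intro _ ts _ _ ζ
      simp [cubeMax]
  | cons ρ L ih =>
      intro hL ts hlen hts ζ
      cases ts with
      | nil => simp at hlen
      | cons x ts' =>
          simp only [List.zipWith_cons_cons, List.sum_cons]
          obtain ⟨hx0, hx1⟩ := hts x (by simp)
          have hρ1 : IsR1 ρ := hL ρ (by simp)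
          set S := (List.zipWith (· • ·) ts' L).sum with hS
          have e : ζ + (x • ρ + S) = (ζ + S) + x • ρ := by abel
          rw [e]
          have h3 : g ((ζ + S) + x • ρ) ≤
              (1 - x) * g ((ζ + S) + (0:ℝ) • ρ) + x * g ((ζ + S) + (1:ℝ) • ρ) := by
            refine hg.three hρ1 (ζ + S) (by linarith) hx0 (by ring) (by ring)
          have h0 : g ((ζ + S) + (0:ℝ) • ρ) ≤ cubeMax g ζ L := by
            have := ih (fun ρ' h => hL ρ' (by simp [h])) ts' (by simpa using hlen)
              (fun y hy => hts y (by simp [hy])) ζ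
            simpa using this
          have h1 : g ((ζ + S) + (1:ℝ) • ρ) ≤ cubeMax g (ζ + ρ) L := by
            have := ih (fun ρ' h => hL ρ' (by simp [h])) ts' (by simpa using hlen)
              (fun y hy => hts y (by simp [hy])) (ζ + ρ)
            have e2 : (ζ + ρ) + S = (ζ + S) + (1:ℝ) • ρ := by
              rw [one_smul]; abel
            rwa [e2] at this
          have hmax : (1 - x) * g ((ζ + S) + (0:ℝ) • ρ) + x * g ((ζ + S) + (1:ℝ) • ρ)
              ≤ max (cubeMax g ζ L) (cubeMax g (ζ + ρ) L) := by
            have hA := le_max_left (cubeMax g ζ L) (cubeMax g (ζ + ρ) L)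
            have hB := le_max_right (cubeMax g ζ L) (cubeMax g (ζ + ρ) L)
            nlinarith [h0, h1]
          calc g ((ζ + S) + x • ρ) ≤ _ := h3
            _ ≤ _ := hmax

lemma zip_replicate_sum : ∀ (L : List (Mat N n)) (s : ℝ),
    (List.zipWith (· • ·) (List.replicate L.length s) L).sum = s • L.sum := by
  intro L
  induction L with
  | nil => intro s; simp
  | cons ρ L ih =>
      intro s
      simp only [List.length_cons, List.replicate_succ, List.zipWith_cons_cons,
        List.sum_cons, smul_add, ih]

/-- upper semicontinuity along rays, via separate convexity. -/
lemma usc {g : Mat N n → ℝ} (hg : Good g) :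
    ∀ (L : List (Mat N n)), (∀ ρ ∈ L, IsR1 ρ) → ∀ (ζ : Mat N n), ∀ ε : ℝ, 0 < ε →
    ∃ δ > (0:ℝ), ∀ s : ℝ, 0 < s → s < δ → g (ζ + s • L.sum) ≤ g ζ + ε := by
  intro L
  induction L with
  | nil =>
      intro _ ζ ε hε
      exact ⟨1, one_pos, fun s _ _ => by simp; linarith⟩
  | cons ρ L ih =>
      intro hL ζ ε hε
      obtain ⟨δ', hδ', hIH⟩ := ih (fun ρ' h => hL ρ' (by simp [h])) ζ (ε/2) (by linarith)
      have hρ1 : IsR1 ρ := hL ρ (by simp)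
      set M := cubeMax g ζ (ρ :: L) with hM
      set X := g ζ + ε/2 with hX
      set C := |M - X| + 1 with hC
      have hC0 : 0 < C := by positivity
      clear_value M X C
      refine ⟨min (min δ' 1) (ε/(2*C)), by positivity, fun s hs0 hs => ?_⟩
      have hs1 : s < 1 := lt_of_lt_of_le hs (le_trans (min_le_left _ _) (min_le_right _ _))
      have hsδ' : s < δ' := lt_of_lt_of_le hs (le_trans (min_le_left _ _) (min_le_left _ _))
      have hsC : s < ε/(2*C) := lt_of_lt_of_le hs (min_le_right _ _)
      have hA : g (ζ + s • L.sum) ≤ X := hIH s hs0 hsδ'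
      have hB : g ((ζ + s • L.sum) + ρ) ≤ M := by
        have hcube := cube_bound hg (ρ :: L) hL (1 :: List.replicate L.length s)
          (by simp) ?_ ζ
        · have e : ζ + (List.zipWith (· • ·) (1 :: List.replicate L.length s) (ρ :: L)).sum
              = (ζ + s • L.sum) + ρ := by
            simp only [List.zipWith_cons_cons, List.sum_cons, one_smul, zip_replicate_sum]
            abel
          rw [hM]
          rwa [e] at hcube
        · intro y hy
          simp only [List.mem_cons] at hy
          rcases hy with rfl | hy
          · norm_num
          · have := List.eq_of_mem_replicate hy
            subst this
            exact ⟨le_of_lt hs0, le_of_lt hs1⟩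
      have h3 : g ((ζ + s • L.sum) + s • ρ) ≤
          (1 - s) * g ((ζ + s • L.sum) + (0:ℝ) • ρ) + s * g ((ζ + s • L.sum) + (1:ℝ) • ρ) :=
        hg.three hρ1 _ (by linarith) (le_of_lt hs0) (by ring) (by ring)
      have e : ζ + s • (ρ :: L).sum = (ζ + s • L.sum) + s • ρ := by
        simp only [List.sum_cons, smul_add]
        abel
      rw [e]
      have e0 : (ζ + s • L.sum) + (0:ℝ) • ρ = ζ + s • L.sum := by simp
      have e1 : (ζ + s • L.sum) + (1:ℝ) • ρ = (ζ + s • L.sum) + ρ := by rw [one_smul]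
      rw [e0, e1] at h3
      have hMX : M - X ≤ C := by
        have := le_abs_self (M - X)
        rw [hC]; linarith
      have hsCle : s * C ≤ ε/2 := by
        have h2C : 0 < 2*C := by linarith
        have := (lt_div_iff₀ h2C).mp hsC
        nlinarith
      have key : (1 - s) * g (ζ + s • L.sum) + s * g ((ζ + s • L.sum) + ρ) ≤ X + s * (M - X) := by
        have t1 : (1 - s) * g (ζ + s • L.sum) ≤ (1 - s) * X :=
          mul_le_mul_of_nonneg_left hA (by linarith)
        have t2 : s * g ((ζ + s • L.sum) + ρ) ≤ s * M :=
          mul_le_mul_of_nonneg_left hB (le_of_lt hs0)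
        nlinarith
      have hsM : s * (M - X) ≤ ε/2 := by
        calc s * (M - X) ≤ s * C := mul_le_mul_of_nonneg_left hMX (le_of_lt hs0)
          _ ≤ ε/2 := hsCle
      linarith [h3, key, hsM]

/-- Subadditivity along rank-one increments. -/
lemma Good.subadd {g : Mat N n → ℝ} (hg : Good g) {η : Mat N n} (hη : IsR1 η)
    (ξ : Mat N n) : g (ξ + η) ≤ g ξ + g η := by
  refine le_of_forall_pos_le_add fun ε hε => ?_
  obtain ⟨δ, hδ, husc⟩ := usc hg (decompList ξ) (isR1_decompList ξ) η (ε/2) (by linarith)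
  set s := min (min (δ/2) (1/2)) (ε/(2*(|g ξ|+1))) with hs
  have habs : 0 < |g ξ| + 1 := by positivity
  have hs0 : 0 < s := by
    apply lt_min (lt_min (by linarith) (by norm_num))
    positivity
  have hs1 : s < 1 := lt_of_le_of_lt (le_trans (min_le_left _ _) (min_le_right _ _)) (by norm_num)
  have hsδ : s < δ := lt_of_le_of_lt (le_trans (min_le_left _ _) (min_le_left _ _)) (by linarith)
  have hsg : s * |g ξ| ≤ ε/2 := by
    have h1 : s ≤ ε/(2*(|g ξ|+1)) := min_le_right _ _
    have h2 : s * (|g ξ| + 1) ≤ ε/(2*(|g ξ|+1)) * (|g ξ|+1) :=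
      mul_le_mul_of_nonneg_right h1 (by positivity)
    have h3 : ε/(2*(|g ξ|+1)) * (|g ξ|+1) = ε/2 := by field_simp
    nlinarith [abs_nonneg (g ξ)]
  have h3 : g (ξ + (1:ℝ) • η) ≤ (1 - s) * g (ξ + (0:ℝ) • η) + s * g (ξ + (1/s) • η) := by
    refine hg.three hη ξ (by linarith) (le_of_lt hs0) (by ring) ?_
    field_simp
    ring
  have hhom : s * g (ξ + (1/s) • η) = g (s • ξ + η) := by
    rw [← hg.hom s hs0]
    congr 1
    rw [smul_add, smul_smul]
    congr 1
    rw [mul_one_div, div_self (ne_of_gt hs0), one_smul]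
  have husc' : g (s • ξ + η) ≤ g η + ε/2 := by
    have h := husc s hs0 hsδ
    rw [sum_decompList] at h
    have e : η + s • ξ = s • ξ + η := by abel
    rwa [e] at h
  have e1 : ξ + (1:ℝ) • η = ξ + η := by rw [one_smul]
  have e0 : ξ + (0:ℝ) • η = ξ := by simp
  rw [e1, e0] at h3
  have hbound : -(s * g ξ) ≤ s * |g ξ| := by
    have := neg_abs_le (g ξ)
    nlinarith [le_of_lt hs0]
  calc g (ξ + η) ≤ (1 - s) * g ξ + s * g (ξ + (1/s) • η) := h3
    _ = (1 - s) * g ξ + g (s • ξ + η) := by rw [hhom]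
    _ ≤ (1 - s) * g ξ + g η + ε/2 := by linarith
    _ = g ξ + g η + ε/2 - s * g ξ := by ring
    _ ≤ g ξ + g η + ε/2 + s * |g ξ| := by linarith
    _ ≤ g ξ + g η + ε := by linarith

lemma Good.subadd_list {g : Mat N n → ℝ} (hg : Good g) :
    ∀ (L : List (Mat N n)), (∀ ρ ∈ L, IsR1 ρ) → ∀ ζ : Mat N n,
    g (ζ + L.sum) ≤ g ζ + (L.map g).sum := by
  intro L
  induction L with
  | nil => intro _ ζ; simp
  | cons ρ L ih =>
      intro h ζ
      have e : ζ + (ρ :: L).sum = (ζ + L.sum) + ρ := by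
        rw [List.sum_cons]; abel
      rw [e]
      have h1 : g ((ζ + L.sum) + ρ) ≤ g (ζ + L.sum) + g ρ :=
        hg.subadd (h ρ (by simp)) _
      have h2 : g (ζ + L.sum) ≤ g ζ + (L.map g).sum := ih (fun ρ' hh => h ρ' (by simp [hh])) ζ
      simp only [List.map_cons, List.sum_cons]
      linarith

lemma Good.slope_antitone {g : Mat N n → ℝ} (hg : Good g) {η : Mat N n} (hη : IsR1 η)
    (ξ : Mat N n) {t u : ℝ} (htu : t ≤ u) :
    g (ξ + u • η) - u * g η ≤ g (ξ + t • η) - t * g η := by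
  have h := hg.subadd (hη.smul (u - t)) (ξ + t • η)
  have h2 : g ((u - t) • η) = (u - t) * g η := hg.homNN (by linarith) η
  have e : (ξ + t • η) + (u - t) • η = ξ + u • η := by
    rw [add_assoc, ← add_smul]
    ring_nf
  rw [e, h2] at h
  linarith

/-- the slope set over which we take the infimum in the blow-down. -/
def slopeSet (g : Mat N n → ℝ) (η ξ : Mat N n) : Set ℝ :=
  (fun t : ℝ => g (ξ + t • η) - t * g η) '' (Ici 0)

lemma slopeSet_nonempty (g : Mat N n → ℝ) (η ξ : Mat N n) : (slopeSet g η ξ).Nonempty :=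
  ⟨g (ξ + (0:ℝ) • η) - 0 * g η, 0, Set.self_mem_Ici, rfl⟩

lemma slopeSet_bddBelow {g : Mat N n → ℝ} (hg : Good g) {η : Mat N n} (hη : IsR1 η)
    (ξ : Mat N n) : BddBelow (slopeSet g η ξ) := by
  refine ⟨-((decompList (-ξ)).map g).sum, ?_⟩
  rintro y ⟨t, ht, rfl⟩
  show -((decompList (-ξ)).map g).sum ≤ g (ξ + t • η) - t * g η
  have h := hg.subadd_list (decompList (-ξ)) (isR1_decompList (-ξ)) (ξ + t • η)
  rw [sum_decompList] at h
  have e : ξ + t • η + -ξ = t • η := by abel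
  rw [e] at h
  have h2 : g (t • η) = t * g η := hg.homNN ht η
  rw [h2] at h
  linarith

/-- Blow-down of `g` along direction `η`. -/
noncomputable def bd (g : Mat N n → ℝ) (η : Mat N n) (ξ : Mat N n) : ℝ :=
  sInf (slopeSet g η ξ)

lemma bd_le {g : Mat N n → ℝ} (hg : Good g) {η : Mat N n} (hη : IsR1 η)
    (ξ : Mat N n) {t : ℝ} (ht : 0 ≤ t) :
    bd g η ξ ≤ g (ξ + t • η) - t * g η :=
  csInf_le (slopeSet_bddBelow hg hη ξ) ⟨t, ht, rfl⟩

lemma bd_le_self {g : Mat N n → ℝ} (hg : Good g) {η : Mat N n} (hη : IsR1 η)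
    (ξ : Mat N n) : bd g η ξ ≤ g ξ := by
  have := bd_le hg hη ξ (le_refl 0)
  simpa using this

lemma bd_exists_near {g : Mat N n → ℝ} (hg : Good g) {η : Mat N n} (hη : IsR1 η)
    (ξ : Mat N n) {ε : ℝ} (hε : 0 < ε) :
    ∃ t : ℝ, 0 ≤ t ∧ g (ξ + t • η) - t * g η < bd g η ξ + ε := by
  have h : sInf (slopeSet g η ξ) < bd g η ξ + ε := by
    rw [bd] at *; linarith
  obtain ⟨y, ⟨t, ht, rfl⟩, hy⟩ := exists_lt_of_csInf_lt (slopeSet_nonempty g η ξ) h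
  exact ⟨t, ht, hy⟩

lemma le_bd {g : Mat N n → ℝ} {η ξ : Mat N n} {c : ℝ}
    (h : ∀ t : ℝ, 0 ≤ t → c ≤ g (ξ + t • η) - t * g η) : c ≤ bd g η ξ := by
  apply le_csInf (slopeSet_nonempty g η ξ)
  rintro y ⟨t, ht, rfl⟩
  exact h t ht

lemma bd_good {g : Mat N n → ℝ} (hg : Good g) {η : Mat N n} (hη : IsR1 η) :
    Good (bd g η) := by
  constructor
  · -- rank-one convexity
    intro ξ' a' b'
    set ρ' := Matrix.vecMulVec a' b' with hρ'def
    have hρ' : IsR1 ρ' := ⟨a', b', rfl⟩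
    refine ⟨convex_univ, ?_⟩
    intro x _ y _ p q hp hq hpq
    simp only [smul_eq_mul]
    refine le_of_forall_pos_le_add fun ε hε => ?_
    obtain ⟨t₁, ht₁0, ht₁⟩ := bd_exists_near hg hη (ξ' + x • ρ') hε
    obtain ⟨t₂, ht₂0, ht₂⟩ := bd_exists_near hg hη (ξ' + y • ρ') hε
    set t := max t₁ t₂ with htdef
    have ht0 : 0 ≤ t := le_trans ht₁0 (le_max_left _ _)
    have key1 : g ((ξ' + x • ρ') + t • η) - t * g η ≤ bd g η (ξ' + x • ρ') + ε :=
      le_trans (hg.slope_antitone hη _ (le_max_left t₁ t₂)) (le_of_lt ht₁)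
    have key2 : g ((ξ' + y • ρ') + t • η) - t * g η ≤ bd g η (ξ' + y • ρ') + ε :=
      le_trans (hg.slope_antitone hη _ (le_max_right t₁ t₂)) (le_of_lt ht₂)
    have main : bd g η (ξ' + (p * x + q * y) • ρ') ≤
        g ((ξ' + (p * x + q * y) • ρ') + t • η) - t * g η := bd_le hg hη _ ht0
    have h3 : g ((ξ' + t • η) + (p * x + q * y) • ρ') ≤
        p * g ((ξ' + t • η) + x • ρ') + q * g ((ξ' + t • η) + y • ρ') :=
      hg.three hρ' (ξ' + t • η) hp hq hpq rfl
    have e : (ξ' + (p * x + q * y) • ρ') + t • η = (ξ' + t • η) + (p * x + q * y) • ρ' := by abel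
    have ex : (ξ' + t • η) + x • ρ' = (ξ' + x • ρ') + t • η := by abel
    have ey : (ξ' + t • η) + y • ρ' = (ξ' + y • ρ') + t • η := by abel
    rw [e] at main
    rw [ex, ey] at h3
    have k1 : p * (g ((ξ' + x • ρ') + t • η) - t * g η) ≤ p * (bd g η (ξ' + x • ρ') + ε) :=
      mul_le_mul_of_nonneg_left key1 hp
    have k2 : q * (g ((ξ' + y • ρ') + t • η) - t * g η) ≤ q * (bd g η (ξ' + y • ρ') + ε) :=
      mul_le_mul_of_nonneg_left key2 hq
    have e1 : p * (g ((ξ' + x • ρ') + t • η) - t * g η) + q * (g ((ξ' + y • ρ') + t • η) - t * g η)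
        = p * g ((ξ' + x • ρ') + t • η) + q * g ((ξ' + y • ρ') + t • η) - t * g η := by
      linear_combination (-(t * g η)) * hpq
    have e2 : p * (bd g η (ξ' + x • ρ') + ε) + q * (bd g η (ξ' + y • ρ') + ε)
        = p * bd g η (ξ' + x • ρ') + q * bd g η (ξ' + y • ρ') + ε := by
      linear_combination ε * hpq
    linarith [h3, main, k1, k2, e1, e2]
  · -- positive homogeneity
    have hle : ∀ c : ℝ, 0 < c → ∀ ξ : Mat N n, bd g η (c • ξ) ≤ c * bd g η ξ := by
      intro c hc ξ
      refine le_of_forall_pos_le_add fun ε hε => ?_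
      obtain ⟨t, ht0, ht⟩ := bd_exists_near hg hη ξ (show (0:ℝ) < ε/c by positivity)
      have hct : 0 ≤ c * t := by positivity
      have h1 : bd g η (c • ξ) ≤ g (c • ξ + (c*t) • η) - (c*t) * g η := bd_le hg hη _ hct
      have e : c • ξ + (c*t) • η = c • (ξ + t • η) := by
        rw [smul_add, smul_smul]
      rw [e, hg.hom c hc] at h1
      calc bd g η (c • ξ) ≤ c * g (ξ + t • η) - c * t * g η := h1
        _ = c * (g (ξ + t • η) - t * g η) := by ring
        _ ≤ c * (bd g η ξ + ε/c) := mul_le_mul_of_nonneg_left (le_of_lt ht) (le_of_lt hc)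
        _ = c * bd g η ξ + ε := by field_simp
    intro c hc ξ
    apply le_antisymm (hle c hc ξ)
    have h2 := hle c⁻¹ (by positivity) (c • ξ)
    rw [smul_smul, inv_mul_cancel₀ (ne_of_gt hc), one_smul] at h2
    have hc' : 0 < c := hc
    calc c * bd g η ξ ≤ c * (c⁻¹ * bd g η (c • ξ)) := mul_le_mul_of_nonneg_left h2 (le_of_lt hc)
      _ = bd g η (c • ξ) := by field_simp

/-- affinity of a function along a direction. -/
def AffAlong (g : Mat N n → ℝ) (μ : Mat N n) (c : ℝ) : Prop :=
  ∀ ζ : Mat N n, ∀ s : ℝ, g (ζ + s • μ) = g ζ + s * c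

lemma bd_aff_le {g : Mat N n → ℝ} (hg : Good g) {η : Mat N n} (hη : IsR1 η)
    (ζ : Mat N n) (s : ℝ) : bd g η (ζ + s • η) ≤ bd g η ζ + s * g η := by
  refine le_of_forall_pos_le_add fun ε hε => ?_
  obtain ⟨t, ht0, ht⟩ := bd_exists_near hg hη ζ hε
  set u := max t s with hu
  have hu0 : 0 ≤ u := le_trans ht0 (le_max_left _ _)
  have hus : 0 ≤ u - s := by
    have := le_max_right t s
    rw [hu]; linarith
  have h1 : bd g η (ζ + s • η) ≤ g ((ζ + s • η) + (u - s) • η) - (u - s) * g η :=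
    bd_le hg hη _ hus
  have e : (ζ + s • η) + (u - s) • η = ζ + u • η := by
    rw [add_assoc, ← add_smul]; ring_nf
  rw [e] at h1
  have h2 : g (ζ + u • η) - u * g η ≤ g (ζ + t • η) - t * g η :=
    hg.slope_antitone hη ζ (le_max_left t s)
  have : g (ζ + u • η) - (u - s) * g η = (g (ζ + u • η) - u * g η) + s * g η := by ring
  rw [this] at h1
  linarith

lemma bd_aff_self {g : Mat N n → ℝ} (hg : Good g) {η : Mat N n} (hη : IsR1 η) :
    AffAlong (bd g η) η (g η) := by
  intro ζ s
  apply le_antisymm (bd_aff_le hg hη ζ s)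
  have h := bd_aff_le hg hη (ζ + s • η) (-s)
  have e : (ζ + s • η) + (-s) • η = ζ := by
    rw [add_assoc, ← add_smul]
    simp
  rw [e] at h
  linarith

lemma sInf_add_const {S : Set ℝ} (hne : S.Nonempty) (hbdd : BddBelow S) (k : ℝ) :
    sInf ((fun x => x + k) '' S) = sInf S + k := by
  have hbdd' : BddBelow ((fun x => x + k) '' S) := by
    obtain ⟨m, hm⟩ := hbdd
    refine ⟨m + k, ?_⟩
    rintro y ⟨x, hx, rfl⟩
    exact add_le_add_left (hm hx) k
  apply le_antisymm
  · have h : ∀ x ∈ S, sInf ((fun x => x + k) '' S) - k ≤ x := by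
      intro x hx
      have := csInf_le hbdd' (⟨x, hx, rfl⟩ : x + k ∈ (fun x => x + k) '' S)
      linarith
    have := le_csInf hne h
    linarith
  · apply le_csInf (hne.image _)
    rintro y ⟨x, hx, rfl⟩
    exact add_le_add_left (csInf_le hbdd hx) k

lemma bd_aff_preserve {g : Mat N n → ℝ} (hg : Good g) {η : Mat N n} (hη : IsR1 η)
    {μ : Mat N n} {c : ℝ}
    (haff : AffAlong g μ c) (ζ : Mat N n) (s : ℝ) :
    bd g η (ζ + s • μ) = bd g η ζ + s * c := by
  have hset : slopeSet g η (ζ + s • μ) = (fun x => x + s * c) '' (slopeSet g η ζ) := by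
    rw [slopeSet, slopeSet, ← Set.image_comp]
    apply Set.image_congr
    intro t _
    simp only [Function.comp_apply]
    have e : ζ + s • μ + t • η = (ζ + t • η) + s • μ := by abel
    rw [e, haff (ζ + t • η) s]
    ring
  rw [bd, bd, hset]
  exact sInf_add_const (slopeSet_nonempty g η ζ) (slopeSet_bddBelow hg hη ζ) (s * c)

lemma bd_le_mono {g : Mat N n → ℝ} (hg : Good g) {η : Mat N n} (hη : IsR1 η)
    {f : Mat N n → ℝ} (h : ∀ ξ, g ξ ≤ f ξ) : ∀ ξ, bd g η ξ ≤ f ξ :=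
  fun ξ => le_trans (bd_le_self hg hη ξ) (h ξ)

/-- iterated blow-down along a list of coordinate directions -/
noncomputable def bdChain (g : Mat N n → ℝ) : List (Fin N × Fin n) → (Mat N n → ℝ)
  | [] => g
  | p :: l => bdChain (bd g (Ep p)) l

lemma bdChain_spec (l : List (Fin N × Fin n)) :
    ∀ g : Mat N n → ℝ, Good g →
      Good (bdChain g l) ∧ (∀ ξ, bdChain g l ξ ≤ g ξ) ∧
      (∀ μ c, AffAlong g μ c → AffAlong (bdChain g l) μ c) ∧
      (∀ p ∈ l, ∃ c, AffAlong (bdChain g l) (Ep p) c) := by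
  induction l with
  | nil =>
      intro g hg
      exact ⟨hg, fun ξ => le_refl _, fun μ c h => h, by simp⟩
  | cons p l ih =>
      intro g hg
      have hE := isR1_Ep p
      have hg' : Good (bd g (Ep p)) := bd_good hg hE
      obtain ⟨hG, hle, haffp, hcoord⟩ := ih (bd g (Ep p)) hg'
      refine ⟨hG, ?_, ?_, ?_⟩
      · intro ξ
        exact le_trans (hle ξ) (bd_le_self hg hE ξ)
      · intro μ c h
        exact haffp μ c (fun ζ s => bd_aff_preserve hg hE h ζ s)
      · intro q hq
        simp only [List.mem_cons] at hq
        rcases hq with rfl | hq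
        · exact ⟨g (Ep q), haffp _ _ (bd_aff_self hg hE)⟩
        · exact hcoord q hq

lemma isR1_of_rank_le_one {A : Mat N n} (h : A.rank ≤ 1) : IsR1 A := by
  have h' : Module.finrank ℝ (LinearMap.range A.mulVecLin) ≤ 1 := h
  obtain ⟨v, hv⟩ := finrank_le_one_iff.mp h'
  set a : Fin N → ℝ := (v : Fin N → ℝ) with ha
  have hcol : ∀ j : Fin n, ∃ cj : ℝ, ∀ i, A i j = cj * a i := by
    intro j
    have hmem : (fun i => A i j) ∈ LinearMap.range A.mulVecLin := by
      refine ⟨Pi.single j 1, ?_⟩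
      rw [Matrix.mulVecLin_apply, Matrix.mulVec_single]
      simp
      rfl
    obtain ⟨cj, hcj⟩ := hv ⟨_, hmem⟩
    refine ⟨cj, fun i => ?_⟩
    have := congrArg Subtype.val hcj
    simp only [SetLike.val_smul] at this
    have h2 := congrFun this i
    simp only [Pi.smul_apply, smul_eq_mul] at h2
    exact h2.symm
  choose bb hbb using hcol
  refine ⟨a, bb, ?_⟩
  ext i j
  rw [Matrix.vecMulVec_apply, hbb j i]
  ring

end KKblowdown

open KKblowdown

/-- Corollary 2 of the paper: a rank-one convex positively
1-homogeneous function on `ℝ^{N×n}` is convex at every matrix of rank at most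
one: it admits a supporting linear functional there. -/
theorem rankOneConvex_homog_convex_at_rank_one
    {N n : ℕ} (f : Matrix (Fin N) (Fin n) ℝ → ℝ)
    (hrc : RankOneConvex f)
    (hhom : ∀ t : ℝ, 0 < t → ∀ ξ : Matrix (Fin N) (Fin n) ℝ, f (t • ξ) = t * f ξ)
    (ξ₀ : Matrix (Fin N) (Fin n) ℝ) (hrank : ξ₀.rank ≤ 1) :
    ∃ ℓ : Matrix (Fin N) (Fin n) ℝ →ₗ[ℝ] ℝ, ℓ ξ₀ = f ξ₀ ∧ ∀ ξ, ℓ ξ ≤ f ξ := by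
  have hGf : Good f := ⟨hrc, hhom⟩
  have hξ₀ : IsR1 ξ₀ := isR1_of_rank_le_one hrank
  set g₁ := bd f ξ₀ with hg₁def
  have hg₁ : Good g₁ := bd_good hGf hξ₀
  have hle₁ : ∀ ξ, g₁ ξ ≤ f ξ := fun ξ => bd_le_self hGf hξ₀ ξ
  have haff₁ : AffAlong g₁ ξ₀ (f ξ₀) := bd_aff_self hGf hξ₀
  set l := (Finset.univ : Finset (Fin N × Fin n)).toList with hl
  obtain ⟨hGG, hleG, haffP, hcoord⟩ := bdChain_spec l g₁ hg₁
  set G := bdChain g₁ l with hGdef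
  have haffG : AffAlong G ξ₀ (f ξ₀) := haffP ξ₀ (f ξ₀) haff₁
  have hG0 : G 0 = 0 := hGG.zero
  have hGξ₀ : G ξ₀ = f ξ₀ := by
    have := haffG 0 1
    simpa [hG0] using this
  have hcoord' : ∀ p : Fin N × Fin n, ∃ c, AffAlong G (Ep p) c := by
    intro p
    exact hcoord p (by simp [hl, Finset.mem_toList])
  choose c hc using hcoord'
  have hrep : ∀ ξ : Mat N n, G ξ = ∑ p : Fin N × Fin n, ξ p.1 p.2 * c p := by
    have key : ∀ s : Finset (Fin N × Fin n), ∀ ξ : Mat N n,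
        G (∑ p ∈ s, ξ p.1 p.2 • Ep p) = ∑ p ∈ s, ξ p.1 p.2 * c p := by
      intro s
      induction s using Finset.induction_on with
      | empty => intro ξ; simp [hG0]
      | insert p s' hps ih =>
          intro ξ
          rw [Finset.sum_insert hps, Finset.sum_insert hps]
          have e : ξ p.1 p.2 • Ep p + ∑ q ∈ s', ξ q.1 q.2 • Ep q
              = (∑ q ∈ s', ξ q.1 q.2 • Ep q) + ξ p.1 p.2 • Ep p := by abel
          rw [e, hc p _ (ξ p.1 p.2), ih ξ]
          ring
    intro ξ
    have hdecomp := sum_smul_Ep ξ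
    calc G ξ = G (∑ p : Fin N × Fin n, ξ p.1 p.2 • Ep p) := by rw [hdecomp]
      _ = ∑ p : Fin N × Fin n, ξ p.1 p.2 * c p := key Finset.univ ξ
  refine ⟨{ toFun := fun ξ => ∑ p : Fin N × Fin n, ξ p.1 p.2 * c p
            map_add' := ?_
            map_smul' := ?_ }, ?_, ?_⟩
  · intro x y
    simp only [Matrix.add_apply, add_mul]
    rw [Finset.sum_add_distrib]
  · intro m x
    simp only [Matrix.smul_apply, smul_eq_mul, RingHom.id_apply]
    rw [Finset.mul_sum]
    apply Finset.sum_congr rfl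
    intro p _
    ring
  · show (∑ p : Fin N × Fin n, ξ₀ p.1 p.2 * c p) = f ξ₀
    rw [← hrep ξ₀, hGξ₀]
  · intro ξ
    show (∑ p : Fin N × Fin n, ξ p.1 p.2 * c p) ≤ f ξ
    rw [← hrep ξ]
    exact le_trans (hleG ξ) (hle₁ ξ)
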